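/- Let a, ã, c > 0 with a < ã. Define ω₁ = (1/2)√(ã² − a²) + √(c + (ã² − a²)/4), ω₂ = −(1/2)√(ã² − a²) + √(c + (ã² − a²)/4), and for n ∈ ℕ, τ₁ₙ = (arccos(−a/ã) + 2πn)/ω₁ and τ₂ₙ = (−arccos(−a/ã) + 2π(n+1))/ω₂. Then for every n ∈ ℕ, iω₁ is a root of λ² + (a + ã e^{−λ τ₁ₙ})λ + c = 0 and iω₂ is a root of λ² + (a + ã e^{−λ τ₂ₙ})λ + c = 0. -/

import Mathlib

open Real

private lemma key_root (a atil c ω τ θ : ℝ) (hτ : ω * τ = θ)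
    (hcos : atil * Real.cos θ = -a) (hsin : atil * Real.sin θ * ω = ω^2 - c) :
    (Complex.I * ω)^2
      + ((a : ℂ) + (atil : ℂ) * Complex.exp (-(Complex.I * ω) * τ)) * (Complex.I * ω)
      + (c : ℂ) = 0 := by
  have h : -(Complex.I * (ω:ℂ)) * (τ:ℂ) = ((-θ : ℝ) : ℂ) * Complex.I := by
    push_cast [← hτ]; ring
  rw [h, Complex.exp_mul_I, ← Complex.ofReal_cos, ← Complex.ofReal_sin,
    Real.cos_neg, Real.sin_neg, Complex.ofReal_neg]
  have h1 : (atil:ℂ) * ((Real.cos θ : ℝ) : ℂ) = -(a:ℂ) := by exact_mod_cast hcos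
  have h2 : (atil:ℂ) * ((Real.sin θ : ℝ) : ℂ) * (ω:ℂ) = (ω:ℂ)^2 - (c:ℂ) := by
    exact_mod_cast hsin
  have hI : Complex.I^2 = -1 := Complex.I_sq
  linear_combination Complex.I*(ω:ℂ)*h1 - Complex.I^2*h2 + (c:ℂ)*hI

theorem imaginary_roots_at_crossing_delays
    (a atil c : ℝ) (ha : 0 < a) (haa : a < atil) (hc : 0 < c) :
    let ω₁ := (1/2) * Real.sqrt (atil^2 - a^2) + Real.sqrt (c + (atil^2 - a^2)/4)
    let ω₂ := -(1/2) * Real.sqrt (atil^2 - a^2) + Real.sqrt (c + (atil^2 - a^2)/4)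
    ∀ n : ℕ,
      (let τ := (Real.arccos (-(a/atil)) + 2 * π * n) / ω₁
       (Complex.I * ω₁)^2
        + ((a : ℂ) + (atil : ℂ) * Complex.exp (-(Complex.I * ω₁) * τ)) * (Complex.I * ω₁)
        + (c : ℂ) = 0)
      ∧ (let τ := (-Real.arccos (-(a/atil)) + 2 * π * (n+1)) / ω₂
       (Complex.I * ω₂)^2
        + ((a : ℂ) + (atil : ℂ) * Complex.exp (-(Complex.I * ω₂) * τ)) * (Complex.I * ω₂)
        + (c : ℂ) = 0) := by
  intro ω₁ ω₂ n
  have hat : 0 < atil := ha.trans haa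
  have hd : 0 < atil^2 - a^2 := by nlinarith
  set s := Real.sqrt (atil^2 - a^2) with hs
  set r := Real.sqrt (c + (atil^2 - a^2)/4) with hr
  have hs0 : 0 < s := Real.sqrt_pos.mpr hd
  have hs2 : s^2 = atil^2 - a^2 := Real.sq_sqrt hd.le
  have hr2 : r^2 = c + (atil^2 - a^2)/4 := Real.sq_sqrt (by nlinarith)
  have hr0 : 0 < r := Real.sqrt_pos.mpr (by nlinarith)
  have hrs : s/2 < r := by nlinarith
  have hω1 : 0 < ω₁ := by show 0 < (1/2)*s + r; nlinarith
  have hω2 : 0 < ω₂ := by show 0 < -(1/2)*s + r; nlinarith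
  -- arccos facts
  have hx1 : (-1 : ℝ) ≤ -(a/atil) := by
    have : a/atil < 1 := (div_lt_one hat).mpr haa
    linarith
  have hx2 : -(a/atil) ≤ 1 := by
    have : 0 < a/atil := by positivity
    linarith
  have hcosx : Real.cos (Real.arccos (-(a/atil))) = -(a/atil) := Real.cos_arccos hx1 hx2
  have hsinx : atil * Real.sin (Real.arccos (-(a/atil))) = s := by
    rw [Real.sin_arccos, hs]
    rw [← Real.sqrt_sq hat.le, ← Real.sqrt_mul (sq_nonneg atil)]
    congr 1
    field_simp
    rw [Real.sq_sqrt (sq_nonneg atil)]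
  have hacos : atil * Real.cos (Real.arccos (-(a/atil))) = -a := by
    rw [hcosx]; field_simp
  constructor
  · intro τ
    apply key_root a atil c ω₁ τ (Real.arccos (-(a/atil)) + 2 * π * n)
    · show ω₁ * ((Real.arccos (-(a/atil)) + 2 * π * n) / ω₁) = _
      field_simp
    · rw [show Real.arccos (-(a/atil)) + 2 * π * n
          = Real.arccos (-(a/atil)) + (n:ℝ) * (2*π) by ring,
        Real.cos_add_nat_mul_two_pi]
      exact hacos
    · rw [show Real.arccos (-(a/atil)) + 2 * π * n
          = Real.arccos (-(a/atil)) + (n:ℝ) * (2*π) by ring,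
        Real.sin_add_nat_mul_two_pi, hsinx]
      show s * ((1/2)*s + r) = ((1/2)*s + r)^2 - c
      linear_combination hs2/4 - hr2
  · intro τ
    apply key_root a atil c ω₂ τ (-Real.arccos (-(a/atil)) + 2 * π * (n+1))
    · show ω₂ * ((-Real.arccos (-(a/atil)) + 2 * π * (n+1)) / ω₂) = _
      field_simp
    · rw [show -Real.arccos (-(a/atil)) + 2 * π * ((n:ℝ)+1)
          = -Real.arccos (-(a/atil)) + ((n:ℝ)+1) * (2*π) by ring]
      rw [show -Real.arccos (-(a/atil)) + ((n:ℝ)+1) * (2*π)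
          = -Real.arccos (-(a/atil)) + ((n+1 : ℕ):ℝ) * (2*π) by push_cast; ring,
        Real.cos_add_nat_mul_two_pi, Real.cos_neg]
      exact hacos
    · rw [show -Real.arccos (-(a/atil)) + 2 * π * ((n:ℝ)+1)
          = -Real.arccos (-(a/atil)) + ((n+1 : ℕ):ℝ) * (2*π) by push_cast; ring,
        Real.sin_add_nat_mul_two_pi, Real.sin_neg]
      have : atil * -Real.sin (Real.arccos (-(a/atil))) = -s := by rw [← hsinx]; ring
      rw [this]
      show -s * (-(1/2)*s + r) = (-(1/2)*s + r)^2 - c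
      linear_combination hs2/4 - hr2
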